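/- Let A be a formula of the language L of intuitionistic predicate logic, M = (F, I) an IQC-model based on an IQC-frame F = (W, R, D), and w ∈ W. For each w-assignment σ: M ⊨_w^σ A (intuitionistic truth) if and only if M̄ ⊨_w^σ A^t (classical temporal truth in the associated Q∘S4.t-model M̄). -/

import Mathlib

/-! ## Propositional intuitionistic formulas and IPC -/

inductive PropForm : Type
  | var : ℕ → PropForm
  | falsum : PropForm
  | and : PropForm → PropForm → PropForm
  | or : PropForm → PropForm → PropForm
  | impl : PropForm → PropForm → PropForm

/-- Hilbert-style intuitionistic propositional calculus. -/
inductive IPC : PropForm → Prop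
  | ax1 (A B : PropForm) : IPC (A.impl (B.impl A))
  | ax2 (A B C : PropForm) : IPC ((A.impl (B.impl C)).impl ((A.impl B).impl (A.impl C)))
  | andE1 (A B : PropForm) : IPC ((A.and B).impl A)
  | andE2 (A B : PropForm) : IPC ((A.and B).impl B)
  | andI (A B : PropForm) : IPC (A.impl (B.impl (A.and B)))
  | orI1 (A B : PropForm) : IPC (A.impl (A.or B))
  | orI2 (A B : PropForm) : IPC (B.impl (A.or B))
  | orE (A B C : PropForm) : IPC ((A.impl C).impl ((B.impl C).impl ((A.or B).impl C)))
  | exfalso (A : PropForm) : IPC (PropForm.falsum.impl A)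
  | mp (A B : PropForm) : IPC (A.impl B) → IPC A → IPC B

/-! ## Bimodal propositional formulas and S4.t -/

inductive BForm : Type
  | var : ℕ → BForm
  | falsum : BForm
  | impl : BForm → BForm → BForm
  | boxF : BForm → BForm
  | boxP : BForm → BForm

def BForm.neg (A : BForm) : BForm := A.impl .falsum
def BForm.diaF (A : BForm) : BForm := (A.neg.boxF).neg
def BForm.diaP (A : BForm) : BForm := (A.neg.boxP).neg

/-- The tense propositional logic S4.t: classical propositional logic, S4 axioms
for both `boxF` and `boxP`, the two tense axioms, MP and both necessitations. -/
inductive S4t : BForm → Prop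
  | ax1 (A B : BForm) : S4t (A.impl (B.impl A))
  | ax2 (A B C : BForm) : S4t ((A.impl (B.impl C)).impl ((A.impl B).impl (A.impl C)))
  | ax3 (A B : BForm) : S4t (((B.neg).impl (A.neg)).impl (A.impl B))
  | kF (A B : BForm) : S4t ((A.impl B).boxF.impl (A.boxF.impl B.boxF))
  | tF (A : BForm) : S4t (A.boxF.impl A)
  | fourF (A : BForm) : S4t (A.boxF.impl A.boxF.boxF)
  | kP (A B : BForm) : S4t ((A.impl B).boxP.impl (A.boxP.impl B.boxP))
  | tP (A : BForm) : S4t (A.boxP.impl A)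
  | fourP (A : BForm) : S4t (A.boxP.impl A.boxP.boxP)
  | tense1 (A : BForm) : S4t (A.impl A.diaF.boxP)
  | tense2 (A : BForm) : S4t (A.impl A.diaP.boxF)
  | mp (A B : BForm) : S4t (A.impl B) → S4t A → S4t B
  | necF (A : BForm) : S4t A → S4t A.boxF
  | necP (A : BForm) : S4t A → S4t A.boxP

/-! ## Predicate tense formulas (the language L_T) -/

/-- Formulas of the bimodal predicate language `L_T`.  The classical basis means
that `⊥, →, ∀, □F, □P` are primitive; the remaining connectives are the usual
classical abbreviations, defined below. -/
inductive TForm : Type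
  | falsum : TForm
  | atom : ℕ → List ℕ → TForm
  | impl : TForm → TForm → TForm
  | all : ℕ → TForm → TForm
  | boxF : TForm → TForm
  | boxP : TForm → TForm

def TForm.neg (A : TForm) : TForm := A.impl .falsum
def TForm.and (A B : TForm) : TForm := (A.impl B.neg).neg
def TForm.or (A B : TForm) : TForm := (A.neg).impl B
def TForm.iff (A B : TForm) : TForm := (A.impl B).and (B.impl A)
def TForm.ex (x : ℕ) (A : TForm) : TForm := (TForm.all x A.neg).neg
def TForm.diaF (A : TForm) : TForm := A.neg.boxF.neg
def TForm.diaP (A : TForm) : TForm := A.neg.boxP.neg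

def TForm.freeVars : TForm → Finset ℕ
  | .falsum => ∅
  | .atom _ args => args.toFinset
  | .impl A B => A.freeVars ∪ B.freeVars
  | .all x A => A.freeVars.erase x
  | .boxF A => A.freeVars
  | .boxP A => A.freeVars

/-- Replace every free occurrence of the variable `x` by `y`. -/
def TForm.subst (x y : ℕ) : TForm → TForm
  | .falsum => .falsum
  | .atom p args => .atom p (args.map fun v => if v = x then y else v)
  | .impl A B => .impl (A.subst x y) (B.subst x y)
  | .all z A => if z = x then .all z A else .all z (A.subst x y)
  | .boxF A => .boxF (A.subst x y)
  | .boxP A => .boxP (A.subst x y)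

/-- `y` is substitutable for `x`: no free occurrence of `x` lies in the scope of
a quantifier binding `y`. -/
def TForm.substOK (x y : ℕ) : TForm → Prop
  | .falsum => True
  | .atom _ _ => True
  | .impl A B => A.substOK x y ∧ B.substOK x y
  | .all z A => z = x ∨ ((z = y → x ∉ A.freeVars) ∧ A.substOK x y)
  | .boxF A => A.substOK x y
  | .boxP A => A.substOK x y

/-- Substitution of `L_T`-formulas for the propositional letters of a bimodal
propositional formula. -/
def BForm.tsubst (s : ℕ → TForm) : BForm → TForm
  | .var n => s n
  | .falsum => .falsum
  | .impl A B => .impl (A.tsubst s) (B.tsubst s)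
  | .boxF A => .boxF (A.tsubst s)
  | .boxP A => .boxP (A.tsubst s)

/-! ## The predicate tense logic Q∘S4.t -/

inductive QoS4t : TForm → Prop
  /-- all substitution instances of theorems of S4.t -/
  | s4t (φ : BForm) (s : ℕ → TForm) : S4t φ → QoS4t (φ.tsubst s)
  /-- (UI°)  ∀y(∀x A → A(y/x)) -/
  | ui (x y : ℕ) (A : TForm) (hok : A.substOK x y) :
      QoS4t (.all y ((TForm.all x A).impl (A.subst x y)))
  /-- ∀x(A → B) → (∀x A → ∀x B) -/
  | distrib (x : ℕ) (A B : TForm) :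
      QoS4t ((TForm.all x (A.impl B)).impl ((TForm.all x A).impl (TForm.all x B)))
  /-- ∀x∀y A ↔ ∀y∀x A -/
  | comm (x y : ℕ) (A : TForm) :
      QoS4t ((TForm.all x (TForm.all y A)).iff (TForm.all y (TForm.all x A)))
  /-- A → ∀x A, x not free in A -/
  | vac (x : ℕ) (A : TForm) (h : x ∉ A.freeVars) : QoS4t (A.impl (.all x A))
  /-- (NID)  ∀x A → A, x not free in A -/
  | nid (x : ℕ) (A : TForm) (h : x ∉ A.freeVars) : QoS4t ((TForm.all x A).impl A)
  /-- (CBF_F)  □F ∀x A → ∀x □F A -/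
  | cbfF (x : ℕ) (A : TForm) : QoS4t ((TForm.all x A).boxF.impl (TForm.all x A.boxF))
  | mp (A B : TForm) : QoS4t (A.impl B) → QoS4t A → QoS4t B
  | gen (x : ℕ) (A : TForm) : QoS4t A → QoS4t (.all x A)
  | necF (A : TForm) : QoS4t A → QoS4t A.boxF
  | necP (A : TForm) : QoS4t A → QoS4t A.boxP

/-! ## The language L of intuitionistic predicate logic and IQC -/

inductive IForm : Type
  | falsum : IForm
  | atom : ℕ → List ℕ → IForm
  | and : IForm → IForm → IForm
  | or : IForm → IForm → IForm
  | impl : IForm → IForm → IForm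
  | all : ℕ → IForm → IForm
  | ex : ℕ → IForm → IForm

def IForm.freeVars : IForm → Finset ℕ
  | .falsum => ∅
  | .atom _ args => args.toFinset
  | .and A B => A.freeVars ∪ B.freeVars
  | .or A B => A.freeVars ∪ B.freeVars
  | .impl A B => A.freeVars ∪ B.freeVars
  | .all x A => A.freeVars.erase x
  | .ex x A => A.freeVars.erase x

def IForm.subst (x y : ℕ) : IForm → IForm
  | .falsum => .falsum
  | .atom p args => .atom p (args.map fun v => if v = x then y else v)
  | .and A B => .and (A.subst x y) (B.subst x y)
  | .or A B => .or (A.subst x y) (B.subst x y)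
  | .impl A B => .impl (A.subst x y) (B.subst x y)
  | .all z A => if z = x then .all z A else .all z (A.subst x y)
  | .ex z A => if z = x then .ex z A else .ex z (A.subst x y)

def IForm.substOK (x y : ℕ) : IForm → Prop
  | .falsum => True
  | .atom _ _ => True
  | .and A B => A.substOK x y ∧ B.substOK x y
  | .or A B => A.substOK x y ∧ B.substOK x y
  | .impl A B => A.substOK x y ∧ B.substOK x y
  | .all z A => z = x ∨ ((z = y → x ∉ A.freeVars) ∧ A.substOK x y)
  | .ex z A => z = x ∨ ((z = y → x ∉ A.freeVars) ∧ A.substOK x y)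

/-- Substitution of `L`-formulas for the propositional letters of an
intuitionistic propositional formula. -/
def PropForm.isubst (s : ℕ → IForm) : PropForm → IForm
  | .var n => s n
  | .falsum => .falsum
  | .and A B => .and (A.isubst s) (B.isubst s)
  | .or A B => .or (A.isubst s) (B.isubst s)
  | .impl A B => .impl (A.isubst s) (B.isubst s)

/-- The intuitionistic predicate calculus IQC. -/
inductive IQC : IForm → Prop
  /-- all substitution instances of theorems of IPC -/
  | ipc (φ : PropForm) (s : ℕ → IForm) : IPC φ → IQC (φ.isubst s)
  /-- (UI)  ∀x A → A(y/x) -/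
  | ui (x y : ℕ) (A : IForm) (hok : A.substOK x y) :
      IQC ((IForm.all x A).impl (A.subst x y))
  /-- A(y/x) → ∃x A -/
  | exI (x y : ℕ) (A : IForm) (hok : A.substOK x y) :
      IQC ((A.subst x y).impl (IForm.ex x A))
  /-- ∀x(A → B) → (A → ∀x B), x not free in A -/
  | allImp (x : ℕ) (A B : IForm) (h : x ∉ A.freeVars) :
      IQC ((IForm.all x (A.impl B)).impl (A.impl (IForm.all x B)))
  /-- ∀x(A → B) → (∃x A → B), x not free in B -/
  | exImp (x : ℕ) (A B : IForm) (h : x ∉ B.freeVars) :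
      IQC ((IForm.all x (A.impl B)).impl ((IForm.ex x A).impl B))
  | mp (A B : IForm) : IQC (A.impl B) → IQC A → IQC B
  | gen (x : ℕ) (A : IForm) : IQC A → IQC (.all x A)

/-! ## The temporal Gödel translation -/

def IForm.t : IForm → TForm
  | .falsum => .falsum
  | .atom p args => .boxF (.atom p args)
  | .and A B => TForm.and A.t B.t
  | .or A B => TForm.or A.t B.t
  | .impl A B => .boxF (A.t.impl B.t)
  | .all x A => .boxF (.all x A.t)
  | .ex x A => TForm.diaP (TForm.ex x A.t)

/-- `closure [x₁,…,xₙ] A = ∀x₁ ⋯ ∀xₙ A`. -/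
def TForm.closure (xs : List ℕ) (A : TForm) : TForm := xs.foldr TForm.all A

/-! ## Generalized Kripke semantics for Q∘S4.t -/

/-- A Q∘S4.t-frame: a reflexive transitive relation on a nonempty set of worlds,
a nonempty constant outer domain `U`, and nonempty increasing inner domains. -/
structure TFrame where
  W : Type
  U : Type
  hW : Nonempty W
  hU : Nonempty U
  R : W → W → Prop
  refl : ∀ w, R w w
  trans : ∀ {u v w}, R u v → R v w → R u w
  D : W → Set U
  Dne : ∀ w, (D w).Nonempty
  Dmono : ∀ {w v}, R w v → D w ⊆ D v

/-- A model based on a Q∘S4.t-frame: interprets each predicate symbol at each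
world as a relation on the outer domain. -/
structure TModel (F : TFrame) where
  I : F.W → ℕ → List F.U → Prop

/-- Truth of an `L_T`-formula at a world under an assignment. -/
def TModel.truth {F : TFrame} (M : TModel F) : F.W → (ℕ → F.U) → TForm → Prop
  | _, _, .falsum => False
  | w, σ, .atom p args => M.I w p (args.map σ)
  | w, σ, .impl A B => M.truth w σ A → M.truth w σ B
  | w, σ, .all x A =>
      ∀ τ : ℕ → F.U, (∀ y, y ≠ x → τ y = σ y) → τ x ∈ F.D w → M.truth w τ A
  | w, σ, .boxF A => ∀ v, F.R w v → M.truth v σ A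
  | w, σ, .boxP A => ∀ v, F.R v w → M.truth v σ A

/-- Validity of an `L_T`-formula in a Q∘S4.t-frame. -/
def TFrame.valid (F : TFrame) (A : TForm) : Prop :=
  ∀ M : TModel F, ∀ w : F.W, ∀ σ : ℕ → F.U, M.truth w σ A

/-! ## Kripke semantics for IQC -/

/-- An IQC-frame: a partial order on a nonempty set of worlds with nonempty
increasing domains. -/
structure IFrame where
  W : Type
  α : Type
  hW : Nonempty W
  R : W → W → Prop
  refl : ∀ w, R w w
  trans : ∀ {u v w}, R u v → R v w → R u w
  antisymm : ∀ {u v}, R u v → R v u → u = v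
  D : W → Set α
  Dne : ∀ w, (D w).Nonempty
  Dmono : ∀ {w v}, R w v → D w ⊆ D v

/-- An IQC-model: `I w P ⊆ (D w)ⁿ`, increasing along `R`. -/
structure IModel (F : IFrame) where
  I : F.W → ℕ → List F.α → Prop
  Isub : ∀ w p as, I w p as → ∀ a ∈ as, a ∈ F.D w
  Imono : ∀ {w v} (p : ℕ) (as : List F.α), F.R w v → I w p as → I v p as

/-- Intuitionistic truth of an `L`-formula at a world under an assignment. -/
def IModel.truth {F : IFrame} (M : IModel F) : F.W → (ℕ → F.α) → IForm → Prop
  | _, _, .falsum => False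
  | w, σ, .atom p args => M.I w p (args.map σ)
  | w, σ, .and A B => M.truth w σ A ∧ M.truth w σ B
  | w, σ, .or A B => M.truth w σ A ∨ M.truth w σ B
  | w, σ, .impl A B => ∀ v, F.R w v → M.truth v σ A → M.truth v σ B
  | w, σ, .all x A =>
      ∀ v, F.R w v → ∀ τ : ℕ → F.α, (∀ y, y ≠ x → τ y = σ y) → τ x ∈ F.D v →
        M.truth v τ A
  | w, σ, .ex x A =>
      ∃ τ : ℕ → F.α, (∀ y, y ≠ x → τ y = σ y) ∧ τ x ∈ F.D w ∧ M.truth w τ A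

/-! ## The associated Q∘S4.t-model M̄ -/

/-- The Q∘S4.t-frame associated to an IQC-frame: same worlds and relation,
outer domain `U = ⋃ { D_w ∣ w ∈ W }`, same inner domains. -/
def IFrame.bar (F : IFrame) : TFrame where
  W := F.W
  U := {a : F.α // ∃ w, a ∈ F.D w}
  hW := F.hW
  hU := by
    obtain ⟨w⟩ := F.hW
    obtain ⟨a, ha⟩ := F.Dne w
    exact ⟨⟨a, w, ha⟩⟩
  R := F.R
  refl := F.refl
  trans := F.trans
  D := fun w => {a | a.1 ∈ F.D w}
  Dne := fun w => by
    obtain ⟨a, ha⟩ := F.Dne w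
    exact ⟨⟨a, w, ha⟩, ha⟩
  Dmono := fun h _ ha => F.Dmono h ha

/-- The Q∘S4.t-model `M̄` associated to an IQC-model `M`. -/
def IModel.bar {F : IFrame} (M : IModel F) : TModel F.bar where
  I := fun w p as => M.I w p (as.map Subtype.val)

/-! ### Auxiliary lemmas -/

lemma truth_and' {F : TFrame} (M : TModel F) (w : F.W) (σ : ℕ → F.U) (X Y : TForm) :
    M.truth w σ (TForm.and X Y) ↔ M.truth w σ X ∧ M.truth w σ Y := by
  simp only [TForm.and, TForm.neg, TModel.truth]
  tauto

lemma truth_or' {F : TFrame} (M : TModel F) (w : F.W) (σ : ℕ → F.U) (X Y : TForm) :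
    M.truth w σ (TForm.or X Y) ↔ M.truth w σ X ∨ M.truth w σ Y := by
  simp only [TForm.or, TForm.neg, TModel.truth]
  tauto

lemma truth_diaP' {F : TFrame} (M : TModel F) (w : F.W) (σ : ℕ → F.U) (X : TForm) :
    M.truth w σ (TForm.diaP X) ↔ ∃ v, F.R v w ∧ M.truth v σ X := by
  simp only [TForm.diaP, TForm.neg, TModel.truth]
  constructor
  · intro h
    by_contra hc
    push_neg at hc
    exact h fun v hv ht => hc v hv ht
  · rintro ⟨v, hv, ht⟩ h
    exact h v hv ht

lemma truth_ex' {F : TFrame} (M : TModel F) (w : F.W) (σ : ℕ → F.U) (x : ℕ) (X : TForm) :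
    M.truth w σ (TForm.ex x X) ↔
      ∃ τ : ℕ → F.U, (∀ y, y ≠ x → τ y = σ y) ∧ τ x ∈ F.D w ∧ M.truth w τ X := by
  simp only [TForm.ex, TForm.neg, TModel.truth]
  constructor
  · intro h
    by_contra hc
    push_neg at hc
    exact h fun τ h1 h2 ht => hc τ h1 h2 ht
  · rintro ⟨τ, h1, h2, h3⟩ h
    exact h τ h1 h2 h3

/-- Classical temporal truth of translated formulas is persistent along `R`. -/
lemma bar_persist {F : IFrame} (M : IModel F) (A : IForm) :
    ∀ (w v : F.W) (σ : ℕ → F.bar.U), F.R w v →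
      M.bar.truth w σ A.t → M.bar.truth v σ A.t := by
  induction A with
  | falsum => intro w v σ _ h; exact h
  | atom p args =>
      intro w v σ hwv h u hu
      exact h u (F.trans hwv hu)
  | and A B ihA ihB =>
      intro w v σ hwv h
      erw [IForm.t, truth_and'] at h ⊢
      exact ⟨ihA w v σ hwv h.1, ihB w v σ hwv h.2⟩
  | or A B ihA ihB =>
      intro w v σ hwv h
      erw [IForm.t, truth_or'] at h ⊢
      exact h.imp (ihA w v σ hwv) (ihB w v σ hwv)
  | impl A B ihA ihB =>
      intro w v σ hwv h u hu
      exact h u (F.trans hwv hu)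
  | all x A ih =>
      intro w v σ hwv h u hu
      exact h u (F.trans hwv hu)
  | ex x A ih =>
      intro w v σ hwv h
      erw [IForm.t, truth_diaP'] at h ⊢
      obtain ⟨u, huw, ht⟩ := h
      exact ⟨u, F.trans huw hwv, ht⟩

/-- Generalized form of the main theorem. -/
lemma iqc_truth_iff_bar_truth_aux (F : IFrame) (M : IModel F) (A : IForm) :
    ∀ (w : F.W) (σ' : ℕ → F.bar.U), (∀ x, (σ' x).1 ∈ F.D w) →
      (M.truth w (fun x => (σ' x).1) A ↔ M.bar.truth w σ' A.t) := by
  induction A with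
  | falsum =>
      intro w σ' _
      exact Iff.rfl
  | atom p args =>
      intro w σ' _
      show M.I w p (args.map fun x => (σ' x).1) ↔
        ∀ v, F.R w v → M.I v p ((args.map σ').map Subtype.val)
      erw [List.map_map]
      constructor
      · intro h v hv
        exact M.Imono p _ hv h
      · intro h
        exact h w (F.refl w)
  | and A B ihA ihB =>
      intro w σ' hσ'
      erw [IForm.t, truth_and']
      exact and_congr (ihA w σ' hσ') (ihB w σ' hσ')
  | or A B ihA ihB =>
      intro w σ' hσ'
      erw [IForm.t, truth_or']
      exact or_congr (ihA w σ' hσ') (ihB w σ' hσ')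
  | impl A B ihA ihB =>
      intro w σ' hσ'
      constructor
      · intro h v hv ha
        have hσv : ∀ x, (σ' x).1 ∈ F.D v := fun x => F.Dmono hv (hσ' x)
        exact (ihB v σ' hσv).mp (h v hv ((ihA v σ' hσv).mpr ha))
      · intro h v hv ha
        have hσv : ∀ x, (σ' x).1 ∈ F.D v := fun x => F.Dmono hv (hσ' x)
        exact (ihB v σ' hσv).mpr (h v hv ((ihA v σ' hσv).mp ha))
  | all x A ih =>
      intro w σ' hσ'
      constructor
      · intro h v hv τ' hvar hmem
        have hτv : ∀ y, (τ' y).1 ∈ F.D v := by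
          intro y
          by_cases hy : y = x
          · subst hy; exact hmem
          · rw [hvar y hy]; exact F.Dmono hv (hσ' y)
        exact (ih v τ' hτv).mp
          (h v hv (fun y => (τ' y).1)
            (fun y hy => congrArg Subtype.val (hvar y hy)) hmem)
      · intro h v hv τ hvar hmem
        set τ' : ℕ → F.bar.U := fun y =>
          ⟨τ y, if hy : y = x then ⟨v, hy ▸ hmem⟩ else ⟨w, hvar y hy ▸ hσ' y⟩⟩ with hτ'
        have hτv : ∀ y, (τ' y).1 ∈ F.D v := by
          intro y
          by_cases hy : y = x
          · subst hy; exact hmem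
          · show τ y ∈ F.D v
            rw [hvar y hy]; exact F.Dmono hv (hσ' y)
        have := h v hv τ' (fun y hy => Subtype.ext (hvar y hy)) hmem
        exact (ih v τ' hτv).mpr this
  | ex x A ih =>
      intro w σ' hσ'
      erw [IForm.t, truth_diaP']
      constructor
      · rintro ⟨τ, hvar, hmem, ht⟩
        refine ⟨w, F.refl w, ?_⟩
        erw [truth_ex']
        set τ' : ℕ → F.bar.U := fun y =>
          ⟨τ y, if hy : y = x then ⟨w, hy ▸ hmem⟩ else ⟨w, hvar y hy ▸ hσ' y⟩⟩ with hτ'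
        have hτw : ∀ y, (τ' y).1 ∈ F.D w := by
          intro y
          by_cases hy : y = x
          · subst hy; exact hmem
          · show τ y ∈ F.D w
            rw [hvar y hy]; exact hσ' y
        exact ⟨τ', fun y hy => Subtype.ext (hvar y hy), hmem, (ih w τ' hτw).mp ht⟩
      · rintro ⟨v, hvw, h⟩
        erw [truth_ex'] at h
        obtain ⟨τ', hvar, hmem, ht⟩ := h
        have hτw : ∀ y, (τ' y).1 ∈ F.D w := by
          intro y
          by_cases hy : y = x
          · subst hy; exact F.Dmono hvw hmem
          · rw [hvar y hy]; exact hσ' y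
        refine ⟨fun y => (τ' y).1, fun y hy => congrArg Subtype.val (hvar y hy), hτw x, ?_⟩
        exact (ih w τ' hτw).mpr (bar_persist M A v w τ' hvw ht)

/-- For an IQC-model `M`, a world `w`, and a `w`-assignment `σ`: intuitionistic
truth of `A` at `w` under `σ` coincides with classical temporal truth of `A^t`
at `w` under `σ` in the associated Q∘S4.t-model `M̄`. -/
theorem iqc_truth_iff_bar_truth (F : IFrame) (M : IModel F) (A : IForm)
    (w : F.W) (σ : ℕ → F.α) (hσ : ∀ x, σ x ∈ F.D w) :
    M.truth w σ A ↔ M.bar.truth w (fun x => ⟨σ x, w, hσ x⟩) A.t :=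
  iqc_truth_iff_bar_truth_aux F M A w (fun x => ⟨σ x, w, hσ x⟩) hσ
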